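/- Let $T$ be a tree and $B \subseteq V(T)$ a minimum skew forcing set. Then $T - B$ has a unique perfect matching which is a maximum matching of $T$; consequently, $Z_-(T) = |V(T)| - 2\nu(T)$, where $\nu(T)$ is the matching number of $T$. -/

import Mathlib

open SimpleGraph

variable {V : Type*}

/-- A skew fort: a nonempty vertex set `F` such that no vertex of the graph
has exactly one neighbor in `F`. -/
def SkewFort (G : SimpleGraph V) (F : Set V) : Prop :=
  F.Nonempty ∧ ∀ v : V, (G.neighborSet v ∩ F).ncard ≠ 1

/-- The vertices eventually forced blue by the skew color change rule starting
from the set `S` of initially blue vertices: a vertex `v` is forced if some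
vertex `u` has `v` as its unique non-blue neighbor. -/
inductive SkewForced (G : SimpleGraph V) (S : Set V) : V → Prop
  | mem : ∀ {v}, v ∈ S → SkewForced G S v
  | force : ∀ {u v}, G.Adj u v → (∀ w, G.Adj u w → w ≠ v → SkewForced G S w) →
      SkewForced G S v

/-- The skew closure of `S`: the final set of blue vertices. -/
def skewClosure (G : SimpleGraph V) (S : Set V) : Set V := {v | SkewForced G S v}

/-- `S` is a skew forcing set if its skew closure is everything. -/
def IsSkewForcingSet (G : SimpleGraph V) (S : Set V) : Prop :=
  skewClosure G S = Set.univ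

/-- The skew forcing number: minimum cardinality of a skew forcing set. -/
noncomputable def skewForcingNumber (G : SimpleGraph V) : ℕ :=
  sInf {n | ∃ S : Set V, S.ncard = n ∧ IsSkewForcingSet G S}

/-- The matching number: maximum number of edges in a matching. -/
noncomputable def matchingNumber (G : SimpleGraph V) : ℕ :=
  sSup {n | ∃ M : G.Subgraph, M.IsMatching ∧ M.edgeSet.ncard = n}

section AuxLemmas

-- basic closure lemmas
theorem skewForced_mono {G : SimpleGraph V} {S S' : Set V} (hSS : S ⊆ S') {v : V}
    (h : SkewForced G S v) : SkewForced G S' v := by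
  induction h with
  | mem h => exact .mem (hSS h)
  | force hadj _ ih => exact .force hadj ih

theorem skewForced_trans {G : SimpleGraph V} {S S' : Set V}
    (hS' : ∀ x ∈ S', SkewForced G S x) {v : V}
    (h : SkewForced G S' v) : SkewForced G S v := by
  induction h with
  | mem h => exact hS' _ h
  | force hadj _ ih => exact .force hadj ih

/-- one iteration step of skew forcing -/
def skewStep (G : SimpleGraph V) (S : Set V) : Set V :=
  S ∪ {v | ∃ u, G.Adj u v ∧ ∀ w, G.Adj u w → w ≠ v → w ∈ S}

theorem skewStep_mono (G : SimpleGraph V) {S S' : Set V} (h : S ⊆ S') :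
    skewStep G S ⊆ skewStep G S' := by
  rintro v (hv | ⟨u, hadj, hw⟩)
  · exact Or.inl (h hv)
  · exact Or.inr ⟨u, hadj, fun w h1 h2 => h (hw w h1 h2)⟩

theorem subset_skewStep (G : SimpleGraph V) (S : Set V) : S ⊆ skewStep G S :=
  Set.subset_union_left

theorem skewStep_iter_mono (G : SimpleGraph V) (S : Set V) {m n : ℕ} (h : m ≤ n) :
    (skewStep G)^[m] S ⊆ (skewStep G)^[n] S := by
  induction n with
  | zero => simp [Nat.le_zero.mp h]
  | succ n ih =>
    rcases Nat.lt_or_ge m (n+1) with h' | h'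
    · refine (ih (by omega)).trans ?_
      rw [Function.iterate_succ_apply']
      exact subset_skewStep _ _
    · have : m = n + 1 := by omega
      simp [this]

theorem iter_skewForced [Fintype V] {G : SimpleGraph V} {S : Set V} :
    ∀ n v, v ∈ (skewStep G)^[n] S → SkewForced G S v := by
  intro n
  induction n with
  | zero => exact fun v hv => .mem hv
  | succ n ih =>
    intro v hn
    rw [Function.iterate_succ_apply'] at hn
    rcases hn with hn | ⟨u, hadj, hw⟩
    · exact ih _ hn
    · exact .force hadj (fun w h1 h2 => ih _ (hw w h1 h2))

theorem skewForced_iff_exists_iter [Fintype V] {G : SimpleGraph V} {S : Set V} {v : V} :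
    SkewForced G S v ↔ ∃ n, v ∈ (skewStep G)^[n] S := by
  classical
  constructor
  · intro h
    induction h with
    | mem h => exact ⟨0, h⟩
    | @force u v hadj hall ih =>
      choose f hf using ih
      set N := Finset.univ.sup (fun w => if h : G.Adj u w ∧ w ≠ v then f w h.1 h.2 else 0) with hN
      refine ⟨N + 1, ?_⟩
      rw [Function.iterate_succ_apply']
      refine Or.inr ⟨u, hadj, fun w h1 h2 => ?_⟩
      have : f w h1 h2 ≤ N := by
        calc f w h1 h2 = (fun w => if h : G.Adj u w ∧ w ≠ v then f w h.1 h.2 else 0) w := by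
              simp [h1, h2]
          _ ≤ N := by rw [hN]; exact Finset.le_sup (f := fun w => if h : G.Adj u w ∧ w ≠ v then f w h.1 h.2 else 0) (Finset.mem_univ w)
      exact skewStep_iter_mono G S this (hf w h1 h2)
  · rintro ⟨n, hn⟩
    exact iter_skewForced n v hn
theorem exists_forcer [Fintype V] {G : SimpleGraph V} {S : Set V} (hS : IsSkewForcingSet G S) :
    ∃ ρ : V → ℕ, ∀ v ∉ S, ∃ u, G.Adj u v ∧ ∀ w, G.Adj u w → w ≠ v → ρ w < ρ v := by
  classical
  set ρ : V → ℕ := fun v => sInf {n | v ∈ (skewStep G)^[n] S} with hρdef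
  have hne : ∀ v, {n | v ∈ (skewStep G)^[n] S}.Nonempty := by
    intro v
    have hv : SkewForced G S v := by
      have : v ∈ skewClosure G S := by rw [hS]; trivial
      exact this
    exact skewForced_iff_exists_iter.mp hv
  refine ⟨ρ, fun v hv => ?_⟩
  have hmem : v ∈ (skewStep G)^[ρ v] S := Nat.sInf_mem (hne v)
  have hpos : ρ v ≠ 0 := by
    intro h0
    rw [h0] at hmem
    exact hv hmem
  obtain ⟨m, hm⟩ := Nat.exists_eq_succ_of_ne_zero hpos
  rw [hm, Function.iterate_succ_apply'] at hmem
  rcases hmem with hmem | ⟨u, hadj, hw⟩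
  · have h1 : ρ v ≤ m := Nat.sInf_le hmem
    omega
  · refine ⟨u, hadj, fun w h1 h2 => ?_⟩
    have h3 : ρ w ≤ m := Nat.sInf_le (hw w h1 h2)
    omega

theorem matching_of_forcer [Fintype V] {G : SimpleGraph V} (ρ : V → ℕ) (u : V → V) :
    ∀ (n : ℕ) (D : Set V), D.ncard = n →
    (∀ v ∈ D, G.Adj (u v) v ∧ ∀ w, G.Adj (u v) w → w ≠ v → ρ w < ρ v) →
    ∃ M : G.Subgraph, M.IsMatching ∧ D ⊆ M.verts ∧
      ∀ x y, M.Adj x y → (x ∈ D ∧ y = u x) ∨ (y ∈ D ∧ x = u y) := by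
  intro n
  induction n using Nat.strong_induction_on with
  | _ n ih =>
  intro D hcard hD
  rcases D.eq_empty_or_nonempty with rfl | hne
  · refine ⟨⊥, fun v hv => absurd hv (by simp), by simp, fun x y hxy => absurd hxy (by simp)⟩
  -- injectivity
  have inj : ∀ v1 ∈ D, ∀ v2 ∈ D, u v1 = u v2 → v1 = v2 := by
    intro v1 h1 v2 h2 hu
    by_contra hne12
    have c1 : ρ v2 < ρ v1 := (hD v1 h1).2 v2 (hu ▸ (hD v2 h2).1) (Ne.symm hne12)
    have c2 : ρ v1 < ρ v2 := (hD v2 h2).2 v1 (hu ▸ (hD v1 h1).1) hne12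
    omega
  obtain ⟨vs, hvs, hmax⟩ := Set.exists_max_image D ρ D.toFinite hne
  -- choose pivot
  have hpivot : ∃ p ∈ D, ∀ v ∈ D, v ∉ ({p, u p} : Set V) → u v ≠ p := by
    by_cases hbad : ∃ v1 ∈ D, u v1 = vs ∧ u vs ≠ v1
    · obtain ⟨v1, hv1, huv1, hnm⟩ := hbad
      refine ⟨v1, hv1, fun v hv hvns hu => ?_⟩
      simp only [Set.mem_insert_iff, Set.mem_singleton_iff, not_or] at hvns
      -- u v = v1 for v ∈ D, v ≠ v1, v ≠ u v1 = vs
      rcases eq_or_ne v vs with rfl | hvvs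
      · exact hnm (hu ▸ rfl)
      · have hadjv1vs : G.Adj v1 vs := by
          rw [← huv1]; exact (hD v1 hv1).1.symm
        have hlt : ρ vs < ρ v := (hD v hv).2 vs (by rw [hu]; exact hadjv1vs) (Ne.symm hvvs)
        have := hmax v hv
        omega
    · refine ⟨vs, hvs, fun v hv hvns hu => ?_⟩
      simp only [Set.mem_insert_iff, Set.mem_singleton_iff, not_or] at hvns
      exact hbad ⟨v, hv, hu, fun h => hvns.2 (h ▸ rfl)⟩
  obtain ⟨p, hp, hpnoin⟩ := hpivot
  have hadjp : G.Adj (u p) p := (hD p hp).1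
  set D' : Set V := D \ {p, u p} with hD'
  have hcard' : D'.ncard < n := by
    have hss : D' ⊂ D := by
      constructor
      · exact Set.diff_subset
      · intro hsub
        exact absurd (hsub hp) (fun h => h.2 (by simp))
    exact hcard ▸ Set.ncard_lt_ncard hss D.toFinite
  obtain ⟨M', hM'm, hM'c, hM'e⟩ := ih D'.ncard hcard' D' rfl
    (fun v hv => hD v hv.1)
  -- key: M'.verts avoids p and u p
  have hMv : ∀ x ∈ M'.verts, x ≠ p ∧ x ≠ u p := by
    intro x hx
    have hx' : x ∈ M'.support := (hM'm.support_eq_verts).symm ▸ hx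
    obtain ⟨y, hxy⟩ := hx'
    rcases hM'e x y hxy with ⟨hxD, -⟩ | ⟨hyD, rfl⟩
    · exact ⟨fun h => hxD.2 (by simp [h]), fun h => hxD.2 (by simp [h])⟩
    · constructor
      · exact hpnoin y hyD.1 hyD.2
      · intro h
        exact hyD.2 (by simp [inj y hyD.1 p hp h])
  set P := G.subgraphOfAdj hadjp with hP
  have hPm : P.IsMatching := Subgraph.IsMatching.subgraphOfAdj hadjp
  have hdisj : Disjoint M'.support P.support := by
    rw [hM'm.support_eq_verts, hPm.support_eq_verts, hP, subgraphOfAdj_verts]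
    rw [Set.disjoint_right]
    rintro x (rfl | rfl) hx
    · exact (hMv _ hx).2 rfl
    · exact (hMv _ hx).1 rfl
  refine ⟨M' ⊔ P, hM'm.sup hPm hdisj, ?_, ?_⟩
  · intro v hv
    rw [Subgraph.verts_sup]
    by_cases hv' : v ∈ ({p, u p} : Set V)
    · right
      rw [hP, subgraphOfAdj_verts]
      rcases hv' with rfl | rfl
      · simp
      · simp
    · exact Or.inl (hM'c ⟨hv, hv'⟩)
  · intro x y hxy
    rcases Subgraph.sup_adj.mp hxy with h | h
    · rcases hM'e x y h with ⟨h1, h2⟩ | ⟨h1, h2⟩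
      · exact Or.inl ⟨h1.1, h2⟩
      · exact Or.inr ⟨h1.1, h2⟩
    · rw [hP, subgraphOfAdj_adj] at h
      rcases Sym2.eq_iff.mp h with ⟨rfl, rfl⟩ | ⟨rfl, rfl⟩
      · exact Or.inr ⟨hp, rfl⟩
      · exact Or.inl ⟨hp, rfl⟩
theorem exists_matching_cover [Fintype V] {G : SimpleGraph V} {S : Set V}
    (hS : IsSkewForcingSet G S) :
    ∃ M : G.Subgraph, M.IsMatching ∧ Sᶜ ⊆ M.verts := by
  obtain ⟨ρ, hρ⟩ := exists_forcer hS
  choose! u hu1 hu2 using hρ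
  obtain ⟨M, h1, h2, -⟩ := matching_of_forcer ρ u Sᶜ.ncard Sᶜ rfl
    (fun v hv => ⟨hu1 v hv, hu2 v hv⟩)
  exact ⟨M, h1, h2⟩

/-- deleting a matched pair from a matching gives a matching -/
theorem matching_deletePair {G : SimpleGraph V} {M : G.Subgraph} (hM : M.IsMatching)
    {a b : V} (hab : M.Adj a b) : (M.deleteVerts {a, b}).IsMatching := by
  rintro v hv
  rw [Subgraph.deleteVerts_verts] at hv
  obtain ⟨hv', hvab⟩ := hv
  obtain ⟨w, hw, huw⟩ := hM hv'
  have ha : v ≠ a := fun h => hvab (by simp [h])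
  have hb : v ≠ b := fun h => hvab (by simp [h])
  have hwa : w ≠ a := by
    rintro rfl
    exact hb ((hM (M.edge_vert hab)).unique hw.symm hab)
  have hwb : w ≠ b := by
    rintro rfl
    exact ha ((hM (M.edge_vert hab.symm)).unique hw.symm hab.symm)
  refine ⟨w, ?_, ?_⟩
  · show (M.deleteVerts {a, b}).Adj v w
    rw [Subgraph.deleteVerts_adj]
    exact ⟨hv', by simp [ha, hb], M.edge_vert hw.symm, by simp [hwa, hwb], hw⟩
  · intro y hy
    have hy' : (M.deleteVerts {a, b}).Adj v y := hy
    rw [Subgraph.deleteVerts_adj] at hy'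
    exact huw y hy'.2.2.2.2

/-- edge set after deleting a matched pair -/
theorem deletePair_edgeSet {G : SimpleGraph V} {M : G.Subgraph} (hM : M.IsMatching)
    {a b : V} (hab : M.Adj a b) :
    (M.deleteVerts {a, b}).edgeSet = M.edgeSet \ {s(a, b)} := by
  ext e
  induction e with
  | _ x y =>
    simp only [Subgraph.mem_edgeSet, Subgraph.deleteVerts_adj, Set.mem_diff,
      Set.mem_singleton_iff]
    constructor
    · rintro ⟨hx, hxab, hy, hyab, hxy⟩
      refine ⟨hxy, fun h => ?_⟩
      rcases Sym2.eq_iff.mp h with ⟨rfl, rfl⟩ | ⟨rfl, rfl⟩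
      · exact hxab (by simp)
      · exact hxab (by simp)
    · rintro ⟨hxy, hne⟩
      have hxa : x ≠ a ∨ y ≠ b := by
        by_contra h
        push_neg at h
        exact hne (by rw [h.1, h.2])
      have hxmem := M.edge_vert hxy
      have hymem := M.edge_vert hxy.symm
      have hx1 : x ≠ a := by
        rintro rfl
        have := (hM (M.edge_vert hab)).unique hxy hab
        rcases hxa with h | h
        · exact h rfl
        · exact h this
      have hy1 : y ≠ a := by
        rintro rfl
        have := (hM (M.edge_vert hab)).unique hxy.symm hab
        exact hne (by rw [this]; exact Sym2.eq_swap)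
      have hx2 : x ≠ b := by
        rintro rfl
        have := (hM (M.edge_vert hab.symm)).unique hxy hab.symm
        exact hne (by rw [this]; exact Sym2.eq_swap)
      have hy2 : y ≠ b := by
        rintro rfl
        have := (hM (M.edge_vert hab.symm)).unique hxy.symm hab.symm
        exact hne (by rw [this])
      exact ⟨hxmem, by simp [hx1, hx2], hymem, by simp [hy1, hy2], hxy⟩

/-- a matching has twice as many vertices as edges -/
theorem matching_ncard_verts [Fintype V] {G : SimpleGraph V} :
    ∀ (n : ℕ) (M : G.Subgraph), M.verts.ncard = n → M.IsMatching →
      M.verts.ncard = 2 * M.edgeSet.ncard := by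
  intro n
  induction n using Nat.strong_induction_on with
  | _ n ih =>
  intro M hcard hM
  rcases M.verts.eq_empty_or_nonempty with he | ⟨a, ha⟩
  · have : M.edgeSet = ∅ := by
      ext e
      induction e with
      | _ x y =>
        simp only [Subgraph.mem_edgeSet, Set.mem_empty_iff_false, iff_false]
        intro h
        exact absurd (M.edge_vert h) (he ▸ Set.notMem_empty x)
    rw [he, this]
    simp
  · obtain ⟨b, hab, -⟩ := hM ha
    set M' := M.deleteVerts {a, b} with hM'
    have hM'm : M'.IsMatching := matching_deletePair hM hab
    have hvab : M'.verts = M.verts \ {a, b} := Subgraph.deleteVerts_verts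
    have hbv : b ∈ M.verts := M.edge_vert hab.symm
    have hne : a ≠ b := hab.ne
    have hsub : ({a, b} : Set V) ⊆ M.verts := by
      rintro x (rfl | rfl)
      exacts [ha, hbv]
    have hv : M.verts.ncard = M'.verts.ncard + 2 := by
      rw [hvab, Set.ncard_diff hsub]
      have : ({a, b} : Set V).ncard = 2 := Set.ncard_pair hne
      have h2 : ({a, b} : Set V).ncard ≤ M.verts.ncard :=
        Set.ncard_le_ncard hsub M.verts.toFinite
      omega
    have he : M.edgeSet.ncard = M'.edgeSet.ncard + 1 := by
      rw [hM', deletePair_edgeSet hM hab,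
        Set.ncard_diff_singleton_of_mem (Subgraph.mem_edgeSet.mpr hab)]
      have : 1 ≤ M.edgeSet.ncard := by
        rw [Nat.one_le_iff_ne_zero, Ne, Set.ncard_eq_zero M.edgeSet.toFinite]
        intro h
        exact absurd (Subgraph.mem_edgeSet.mpr hab) (h ▸ Set.notMem_empty _)
      omega
    have hlt : M'.verts.ncard < n := by omega
    have := ih M'.verts.ncard hlt M' rfl hM'm
    omega
/-- In a tree, every nonempty set of vertices contains a vertex with at most one
neighbor inside the set. -/
theorem tree_exists_leaf [Fintype V] {T : SimpleGraph V} (hT : T.IsTree) {s : Set V}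
    (hs : s.Nonempty) : ∃ l ∈ s, {x ∈ s | T.Adj l x}.Subsingleton := by
  classical
  obtain ⟨r, hr⟩ := id hs
  obtain ⟨l, hls, hmax⟩ := Set.exists_max_image s (fun v => T.dist r v) s.toFinite hs
  refine ⟨l, hls, ?_⟩
  -- For each neighbor x of l in s, construct the path from l to r starting with x
  have key : ∀ x, x ∈ s → T.Adj l x →
      ∃ p : T.Walk l r, p.IsPath ∧ p.getVert 1 = x := by
    intro x hxs hadj
    obtain ⟨w, hw⟩ := hT.isConnected.exists_walk_length_eq_dist r x
    have hlnot : l ∉ w.support := by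
      intro hmem
      have hspec := SimpleGraph.Walk.take_spec w hmem
      have h1 : T.dist r l ≤ (w.takeUntil l hmem).length := SimpleGraph.dist_le _
      have h2 : T.dist l x ≤ (w.dropUntil l hmem).length := SimpleGraph.dist_le _
      have h3 : (w.takeUntil l hmem).length + (w.dropUntil l hmem).length = w.length := by
        rw [← SimpleGraph.Walk.length_append, hspec]
      have h4 : T.dist l x ≠ 0 := by
        rw [Ne, (hT.isConnected l x).dist_eq_zero_iff]
        exact fun h => T.irrefl (h ▸ hadj)
      have h5 : T.dist r x ≤ T.dist r l := hmax x hxs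
      omega
    set q := w.toPath with hq
    have hqsup : l ∉ (q : T.Walk r x).support := fun h => hlnot (SimpleGraph.Walk.support_toPath_subset w h)
    refine ⟨SimpleGraph.Walk.cons hadj (q : T.Walk r x).reverse, ?_, ?_⟩
    · refine SimpleGraph.Walk.IsPath.cons (q.2.reverse) ?_
      rw [SimpleGraph.Walk.support_reverse]
      exact fun h => hqsup (List.mem_reverse.mp h)
    · rw [SimpleGraph.Walk.getVert_cons _ _ one_ne_zero]
      simp
  intro x hx y hy
  obtain ⟨px, hpx, hgx⟩ := key x hx.1 hx.2
  obtain ⟨py, hpy, hgy⟩ := key y hy.1 hy.2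
  have h2 : px = py := congrArg Subtype.val (hT.IsAcyclic.path_unique ⟨px, hpx⟩ ⟨py, hpy⟩)
  rw [← hgx, ← hgy, h2]
/-- The restriction of a graph to a vertex set (edges within the set). -/
def restrictTo (G : SimpleGraph V) (s : Set V) : SimpleGraph V where
  Adj x y := G.Adj x y ∧ x ∈ s ∧ y ∈ s
  symm := ⟨fun x y h => ⟨h.1.symm, h.2.2, h.2.1⟩⟩
  loopless := ⟨fun x h => G.irrefl h.1⟩

@[simp] theorem restrictTo_adj {G : SimpleGraph V} {s : Set V} {x y : V} :
    (restrictTo G s).Adj x y ↔ G.Adj x y ∧ x ∈ s ∧ y ∈ s := Iff.rfl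

theorem restrictTo_univ (G : SimpleGraph V) : restrictTo G Set.univ = G := by
  ext x y
  simp

/-- lifting forcing along a graph inclusion -/
theorem skewForced_lift {G G' : SimpleGraph V} {S S' : Set V}
    (hsub : ∀ x y, G'.Adj x y → G.Adj x y)
    (hS : ∀ x ∈ S', SkewForced G S x)
    (hextra : ∀ u w, G.Adj u w → (∃ z, G'.Adj u z) → ¬ G'.Adj u w → SkewForced G S w) :
    ∀ v, SkewForced G' S' v → SkewForced G S v := by
  intro v h
  induction h with
  | mem h => exact hS _ h
  | @force u v hadj hall ih =>
    refine .force (hsub _ _ hadj) (fun w h1 h2 => ?_)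
    by_cases hw : G'.Adj u w
    · exact ih w hw h2
    · exact hextra u w h1 ⟨v, hadj⟩ hw

theorem forcing_of_maximal_matching [Fintype V] {T : SimpleGraph V} (hT : T.IsTree) :
    ∀ (n : ℕ) (s : Set V) (M : T.Subgraph), s.ncard = n → M.IsMatching → M.verts ⊆ s →
    (∀ x y, x ∈ s → y ∈ s → T.Adj x y → x ∈ M.verts ∨ y ∈ M.verts) →
    ∀ v ∈ s, SkewForced (restrictTo T s) (s \ M.verts) v := by
  intro n
  induction n using Nat.strong_induction_on with
  | _ n ih =>
  intro s M hcard hM hMs hmaxl v hv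
  have hsne : s.Nonempty := ⟨v, hv⟩
  obtain ⟨l, hls, hsub⟩ := tree_exists_leaf hT hsne
  by_cases hlM : l ∈ M.verts
  · -- l is matched, to its unique in-s neighbor q
    obtain ⟨q, hq, huq⟩ := hM hlM
    have hqM : q ∈ M.verts := M.edge_vert hq.symm
    have hqs : q ∈ s := hMs hqM
    have hadjlq : T.Adj l q := M.adj_sub hq
    have hlq : l ≠ q := hadjlq.ne
    -- l's only neighbor in s is q
    have honly : ∀ w ∈ s, T.Adj l w → w = q := fun w hws hw => hsub ⟨hws, hw⟩ ⟨hqs, hadjlq⟩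
    have hA : SkewForced (restrictTo T s) (s \ M.verts) q := by
      refine .force (restrictTo_adj.mpr ⟨hadjlq, hls, hqs⟩) (fun w h1 h2 => ?_)
      rcases restrictTo_adj.mp h1 with ⟨hw, -, hws⟩
      exact absurd (honly w hws hw) h2
    set s' : Set V := s \ {l, q} with hs'
    set M' := M.deleteVerts {l, q} with hM'
    have hM'm : M'.IsMatching := matching_deletePair hM hq
    have hM'v : M'.verts = M.verts \ {l, q} := Subgraph.deleteVerts_verts
    have hcard' : s'.ncard < n := by
      rw [← hcard]
      exact Set.ncard_lt_ncard ⟨Set.diff_subset, fun hsubs =>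
        (hsubs hls).2 (by simp)⟩ s.toFinite
    have hrec := ih s'.ncard hcard' s' M' rfl hM'm
      (by rw [hM'v]; exact fun x hx => ⟨hMs hx.1, hx.2⟩)
      (by
        intro x y hx hy hxy
        rcases hmaxl x y hx.1 hy.1 hxy with h | h
        · exact Or.inl (hM'v ▸ ⟨h, hx.2⟩)
        · exact Or.inr (hM'v ▸ ⟨h, hy.2⟩))
    -- lift the recursive forcing
    have hB : ∀ v ∈ s', SkewForced (restrictTo T s) (s \ M.verts) v := by
      intro v hv'
      refine skewForced_lift ?_ ?_ ?_ v (hrec v hv')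
      · rintro x y ⟨hxy, hx, hy⟩
        exact ⟨hxy, hx.1, hy.1⟩
      · intro x hx
        rcases hx with ⟨hx1, hx2⟩
        refine .mem ⟨hx1.1, fun hxM => hx2 ?_⟩
        rw [hM'v]
        exact ⟨hxM, hx1.2⟩
      · rintro u w ⟨huw, hu, hw⟩ ⟨z, hz⟩ hnadj
        have hus' : u ∈ s' := (restrictTo_adj.mp hz).2.1
        have hws' : w ∉ s' := fun h => hnadj ⟨huw, hus', h⟩
        have : w = l ∨ w = q := by
          by_contra hc
          push_neg at hc
          exact hws' ⟨hw, by simp [hc.1, hc.2]⟩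
        rcases this with rfl | rfl
        · -- w = l : but u ∈ s' is adjacent to l, so u = q ∉ s', contradiction
          exact absurd (honly u hus'.1 huw.symm) (fun h => hus'.2 (by simp [h]))
        · exact hA
    have hC : SkewForced (restrictTo T s) (s \ M.verts) l := by
      refine .force (restrictTo_adj.mpr ⟨hadjlq.symm, hqs, hls⟩) (fun w h1 h2 => ?_)
      rcases restrictTo_adj.mp h1 with ⟨hw, -, hws⟩
      have hwq : w ≠ q := fun h => T.irrefl (h ▸ hw)
      exact hB w ⟨hws, by simp [h2, hwq]⟩
    rcases eq_or_ne v l with rfl | hvl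
    · exact hC
    rcases eq_or_ne v q with rfl | hvq
    · exact hA
    · exact hB v ⟨hv, by simp [hvl, hvq]⟩
  · -- l is unmatched, hence blue; delete it and recurse
    set s' : Set V := s \ {l} with hs'
    have hcard' : s'.ncard < n := by
      rw [← hcard]
      exact Set.ncard_lt_ncard ⟨Set.diff_subset, fun hsubs =>
        (hsubs hls).2 (by simp)⟩ s.toFinite
    have hrec := ih s'.ncard hcard' s' M rfl hM
      (fun x hx => ⟨hMs hx, fun h => hlM (Set.mem_singleton_iff.mp h ▸ hx)⟩)
      (fun x y hx hy hxy => hmaxl x y hx.1 hy.1 hxy)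
    rcases eq_or_ne v l with rfl | hvl
    · exact .mem ⟨hv, hlM⟩
    have hBl : ∀ v ∈ s', SkewForced (restrictTo T s) (s \ M.verts) v := by
      intro v hv'
      refine skewForced_lift ?_ ?_ ?_ v (hrec v hv')
      · rintro x y ⟨hxy, hx, hy⟩
        exact ⟨hxy, hx.1, hy.1⟩
      · rintro x ⟨hx1, hx2⟩
        exact .mem ⟨hx1.1, hx2⟩
      · rintro u w ⟨huw, hu, hw⟩ ⟨z, hz⟩ hnadj
        have hus' : u ∈ s' := (restrictTo_adj.mp hz).2.1
        have hws' : w ∉ s' := fun h => hnadj ⟨huw, hus', h⟩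
        have hwl : w = l := by
          by_contra hc
          exact hws' ⟨hw, by simp [hc]⟩
        exact .mem ⟨hw, hwl ▸ hlM⟩
    exact hBl v ⟨hv, hvl⟩
theorem unique_matching_on [Fintype V] {T : SimpleGraph V} (hT : T.IsTree) :
    ∀ (n : ℕ) (s : Set V) (M M' : T.Subgraph), s.ncard = n →
    M.IsMatching → M'.IsMatching → M.verts = s → M'.verts = s → M = M' := by
  intro n
  induction n using Nat.strong_induction_on with
  | _ n ih =>
  intro s M M' hcard hM hM' hMv hM'v
  rcases s.eq_empty_or_nonempty with rfl | hsne
  · refine Subgraph.ext (hMv.trans hM'v.symm) ?_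
    ext x y
    constructor
    · intro h
      exact absurd (hMv ▸ M.edge_vert h) (Set.notMem_empty x)
    · intro h
      exact absurd (hM'v ▸ M'.edge_vert h) (Set.notMem_empty x)
  obtain ⟨l, hls, hsub⟩ := tree_exists_leaf hT hsne
  obtain ⟨p, hp, hup⟩ := hM (hMv.symm ▸ hls)
  obtain ⟨p', hp', hup'⟩ := hM' (hM'v.symm ▸ hls)
  have hpeq : p = p' := by
    have h1 : p ∈ {x ∈ s | T.Adj l x} := ⟨hMv ▸ M.edge_vert hp.symm, M.adj_sub hp⟩
    have h2 : p' ∈ {x ∈ s | T.Adj l x} := ⟨hM'v ▸ M'.edge_vert hp'.symm, M'.adj_sub hp'⟩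
    exact hsub h1 h2
  subst hpeq
  have hlp : l ≠ p := (M.adj_sub hp).ne
  have hps : p ∈ s := hMv ▸ M.edge_vert hp.symm
  have hcard' : (s \ {l, p}).ncard < n := by
    rw [← hcard]
    exact Set.ncard_lt_ncard ⟨Set.diff_subset, fun hsubs =>
      (hsubs hls).2 (by simp)⟩ s.toFinite
  have hdel := ih (s \ {l, p}).ncard hcard' (s \ {l, p})
    (M.deleteVerts {l, p}) (M'.deleteVerts {l, p}) rfl
    (matching_deletePair hM hp) (matching_deletePair hM' hp')
    (by rw [Subgraph.deleteVerts_verts, hMv]) (by rw [Subgraph.deleteVerts_verts, hM'v])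
  -- deduce M = M'
  have key : ∀ (N N' : T.Subgraph), N.IsMatching → N.verts = s →
      N.Adj l p → N'.Adj l p →
      N.deleteVerts {l, p} = N'.deleteVerts {l, p} → ∀ x y, N.Adj x y → N'.Adj x y := by
    intro N N' hN hNv hNlp hN'lp hdel x y hxy
    have hNl : l ∈ N.verts := hNv.symm ▸ hls
    have hNp : p ∈ N.verts := N.edge_vert hNlp.symm
    rcases eq_or_ne x l with rfl | hxl
    · have : y = p := (hN hNl).unique hxy hNlp
      exact this ▸ hN'lp
    rcases eq_or_ne y l with rfl | hyl
    · have : x = p := (hN hNl).unique hxy.symm hNlp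
      exact (this ▸ hN'lp).symm
    rcases eq_or_ne x p with rfl | hxp
    · exact absurd ((hN hNp).unique hxy hNlp.symm) hyl
    rcases eq_or_ne y p with rfl | hyp
    · exact absurd ((hN hNp).unique hxy.symm hNlp.symm) hxl
    · have hx : (N.deleteVerts {l, p}).Adj x y :=
        Subgraph.deleteVerts_adj.mpr
          ⟨N.edge_vert hxy, by simp [hxl, hxp], N.edge_vert hxy.symm, by simp [hyl, hyp], hxy⟩
      rw [hdel] at hx
      exact (Subgraph.deleteVerts_adj.mp hx).2.2.2.2
  have hM'lp : M'.Adj l p := hp'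
  refine Subgraph.ext (hMv.trans hM'v.symm) ?_
  ext x y
  exact ⟨key M M' hM hMv hp hM'lp hdel x y,
    key M' M hM' hM'v hM'lp hp hdel.symm x y⟩
theorem matchingNumber_spec [Fintype V] (G : SimpleGraph V) :
    (∃ M : G.Subgraph, M.IsMatching ∧ M.edgeSet.ncard = matchingNumber G) ∧
    (∀ M : G.Subgraph, M.IsMatching → M.edgeSet.ncard ≤ matchingNumber G) := by
  classical
  have hzero : (0 : ℕ) ∈ {n | ∃ M : G.Subgraph, M.IsMatching ∧ M.edgeSet.ncard = n} := by
    refine ⟨⊥, fun v hv => absurd hv (by simp), ?_⟩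
    have : (⊥ : G.Subgraph).edgeSet = ∅ := Subgraph.edgeSet_bot
    rw [this]
    simp
  have hbdd : BddAbove {n | ∃ M : G.Subgraph, M.IsMatching ∧ M.edgeSet.ncard = n} := by
    refine ⟨G.edgeSet.ncard, ?_⟩
    rintro m ⟨M, -, rfl⟩
    exact Set.ncard_le_ncard M.edgeSet_subset G.edgeSet.toFinite
  constructor
  · exact Nat.sSup_mem ⟨0, hzero⟩ hbdd
  · intro M hM
    exact le_csSup hbdd ⟨M, hM, rfl⟩

theorem main_result [Fintype V] (T : SimpleGraph V) (hT : T.IsTree)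
    (B : Set V) (hB : IsSkewForcingSet T B) (hmin : B.ncard = skewForcingNumber T) :
    (∃! M : T.Subgraph, M.verts = Bᶜ ∧ M.IsMatching) ∧
    (∀ M : T.Subgraph, M.verts = Bᶜ → M.IsMatching → M.edgeSet.ncard = matchingNumber T) ∧
    skewForcingNumber T = Fintype.card V - 2 * matchingNumber T := by
  classical
  obtain ⟨⟨M₀, hM₀m, hM₀e⟩, hle⟩ := matchingNumber_spec T
  set ν := matchingNumber T with hν
  set nV := Fintype.card V with hnV
  -- counting for any matching
  have hcnt : ∀ M : T.Subgraph, M.IsMatching → M.verts.ncard = 2 * M.edgeSet.ncard :=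
    fun M hm => matching_ncard_verts M.verts.ncard M rfl hm
  have hM₀v : M₀.verts.ncard = 2 * ν := by rw [hcnt M₀ hM₀m, hM₀e]
  have hnat : Nat.card V = nV := Nat.card_eq_fintype_card
  have hM₀le : M₀.verts.ncard ≤ nV := by
    rw [← hnat, ← Set.ncard_univ]
    exact Set.ncard_le_ncard (Set.subset_univ _) Set.finite_univ
  -- M₀ is maximal
  have hmaxl : ∀ x y, T.Adj x y → x ∈ M₀.verts ∨ y ∈ M₀.verts := by
    intro x y hxy
    by_contra hc
    push_neg at hc
    have hsupd : Disjoint M₀.support (T.subgraphOfAdj hxy).support := by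
      rw [hM₀m.support_eq_verts, (Subgraph.IsMatching.subgraphOfAdj hxy).support_eq_verts,
        subgraphOfAdj_verts, Set.disjoint_right]
      rintro z (rfl | rfl)
      exacts [fun h => hc.1 h, fun h => hc.2 h]
    have hM₁ : (M₀ ⊔ T.subgraphOfAdj hxy).IsMatching :=
      hM₀m.sup (Subgraph.IsMatching.subgraphOfAdj hxy) hsupd
    have hnotm : s(x, y) ∉ M₀.edgeSet := fun h => hc.1 (M₀.edge_vert h)
    have hedge : (M₀ ⊔ T.subgraphOfAdj hxy).edgeSet.ncard = ν + 1 := by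
      rw [Subgraph.edgeSet_sup, SimpleGraph.edgeSet_subgraphOfAdj hxy, Set.union_singleton,
        Set.ncard_insert_of_notMem hnotm M₀.edgeSet.toFinite, hM₀e]
    have := hle _ hM₁
    omega
  -- M₀'s complement is a skew forcing set
  have hforc : IsSkewForcingSet T M₀.vertsᶜ := by
    have h := forcing_of_maximal_matching hT (Set.univ : Set V).ncard Set.univ M₀ rfl hM₀m
      (Set.subset_univ _) (fun x y _ _ hxy => hmaxl x y hxy)
    rw [restrictTo_univ] at h
    apply Set.eq_univ_of_forall
    intro v
    have := h v trivial
    rwa [Set.compl_eq_univ_diff]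
  have hM₀c : M₀.vertsᶜ.ncard = nV - 2 * ν := by
    have := Set.ncard_add_ncard_compl M₀.verts
    rw [hnat] at this
    omega
  -- lower bound for any forcing set
  have hlow : ∀ S : Set V, IsSkewForcingSet T S → nV - 2 * ν ≤ S.ncard := by
    intro S hS
    obtain ⟨M, hMm, hMc⟩ := exists_matching_cover hS
    have h1 : Sᶜ.ncard ≤ M.verts.ncard := Set.ncard_le_ncard hMc M.verts.toFinite
    have h2 : M.verts.ncard = 2 * M.edgeSet.ncard := hcnt M hMm
    have h3 := hle M hMm
    have h4 := Set.ncard_add_ncard_compl S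
    rw [hnat] at h4
    omega
  -- the skew forcing number
  have hsfn : skewForcingNumber T = nV - 2 * ν := by
    refine le_antisymm ?_ ?_
    · exact Nat.sInf_le ⟨M₀.vertsᶜ, hM₀c, hforc⟩
    · refine le_csInf ⟨M₀.vertsᶜ.ncard, M₀.vertsᶜ, rfl, hforc⟩ ?_
      rintro m ⟨S, rfl, hS⟩
      exact hlow S hS
  have hBcard : B.ncard = nV - 2 * ν := hmin.trans hsfn
  have h2ν : 2 * ν ≤ nV := by omega
  have hBc : Bᶜ.ncard = 2 * ν := by
    have := Set.ncard_add_ncard_compl B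
    rw [hnat] at this
    omega
  -- existence of the perfect matching on Bᶜ
  obtain ⟨M, hMm, hMc⟩ := exists_matching_cover hB
  have hMv : Bᶜ = M.verts := by
    refine Set.eq_of_subset_of_ncard_le hMc ?_ M.verts.toFinite
    rw [hBc, hcnt M hMm]
    have := hle M hMm
    omega
  -- any matching on Bᶜ is a maximum matching
  have hcount : ∀ M' : T.Subgraph, M'.verts = Bᶜ → M'.IsMatching →
      M'.edgeSet.ncard = ν := by
    intro M' hv hm
    have := hcnt M' hm
    rw [hv, hBc] at this
    omega
  refine ⟨⟨M, ⟨hMv.symm, hMm⟩, ?_⟩, hcount, hsfn⟩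
  rintro M' ⟨hM'v, hM'm⟩
  exact unique_matching_on hT Bᶜ.ncard Bᶜ M' M rfl hM'm hMm hM'v hMv.symm

end AuxLemmas

/-- If `B` is a minimum skew forcing set of a tree `T`, then `T - B` has a unique
perfect matching, which is a maximum matching of `T`; consequently
`Z₋(T) = |V(T)| - 2ν(T)`. -/
theorem tree_min_skew_forcing_matching [Fintype V] (T : SimpleGraph V) (hT : T.IsTree)
    (B : Set V) (hB : IsSkewForcingSet T B) (hmin : B.ncard = skewForcingNumber T) :
    (∃! M : T.Subgraph, M.verts = Bᶜ ∧ M.IsMatching) ∧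
    (∀ M : T.Subgraph, M.verts = Bᶜ → M.IsMatching → M.edgeSet.ncard = matchingNumber T) ∧
    skewForcingNumber T = Fintype.card V - 2 * matchingNumber T :=
  main_result T hT B hB hmin
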